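/- arXiv:0911.1119 — 2 statements merged into one kernel-verified Lean document; each statement's English description precedes it below -/
import Mathlib

section
/- Let 0 < t₀ ≤ T₀ < ∞ and A = {(t,T) : 0 ≤ t ≤ t₀, t ≤ T ≤ T₀}. If d : A → ℝ₊ is bounded and satisfies d(t,T) ≤ K ∫₀ᵗ ∫ₛ^T d(s,u) du ds for all (t,T) ∈ A, where 0 < K < ∞, then d ≡ 0 on A. -/
open MeasureTheory intervalIntegral

theorem gronwall_2d_zero
    (t₀ T₀ : ℝ) (ht₀ : 0 < t₀) (hT₀ : t₀ ≤ T₀)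
    (d : ℝ → ℝ → ℝ) (K : ℝ) (hK : 0 < K)
    (hd0 : ∀ t T, 0 ≤ t → t ≤ t₀ → t ≤ T → T ≤ T₀ → 0 ≤ d t T)
    (hbdd : ∃ M : ℝ, ∀ t T, 0 ≤ t → t ≤ t₀ → t ≤ T → T ≤ T₀ → d t T ≤ M)
    (hineq : ∀ t T, 0 ≤ t → t ≤ t₀ → t ≤ T → T ≤ T₀ →
      d t T ≤ K * ∫ s in (0:ℝ)..t, ∫ u in s..T, d s u) :
    ∀ t T, 0 ≤ t → t ≤ t₀ → t ≤ T → T ≤ T₀ → d t T = 0 := by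
  obtain ⟨M, hM⟩ := hbdd
  have hT0 : (0:ℝ) ≤ T₀ := le_trans ht₀.le hT₀
  have hM0 : 0 ≤ M := le_trans (hd0 0 0 le_rfl ht₀.le le_rfl hT0) (hM 0 0 le_rfl ht₀.le le_rfl hT0)
  have hKT : 0 ≤ K * T₀ := mul_nonneg hK.le hT0
  have key : ∀ n : ℕ, ∀ t T, 0 ≤ t → t ≤ t₀ → t ≤ T → T ≤ T₀ →
      d t T ≤ M * (K * T₀) ^ n * t ^ n / n.factorial := by
    intro n
    induction n with
    | zero =>
      intro t T h1 h2 h3 h4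
      simpa using hM t T h1 h2 h3 h4
    | succ n ih =>
      intro t T h1 h2 h3 h4
      have hgnn : ∀ s : ℝ, 0 ≤ s → 0 ≤ M * (K * T₀) ^ n * s ^ n / n.factorial := by
        intro s hs; positivity
      have inner : ∀ s : ℝ, 0 ≤ s → s ≤ t →
          (∫ u in s..T, d s u) ≤ T₀ * (M * (K * T₀) ^ n) * s ^ n / n.factorial := by
        intro s hs hst
        by_cases h : IntervalIntegrable (d s) volume s T
        · have hsT : s ≤ T := hst.trans h3
          calc (∫ u in s..T, d s u)
              ≤ ∫ _u in s..T, (M * (K * T₀) ^ n * s ^ n / n.factorial : ℝ) := by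
                apply intervalIntegral.integral_mono_on hsT h intervalIntegrable_const
                intro u hu
                exact ih s u hs (hst.trans h2) hu.1 (hu.2.trans h4)
            _ = (T - s) * (M * (K * T₀) ^ n * s ^ n / n.factorial) := by
                rw [intervalIntegral.integral_const, smul_eq_mul]
            _ ≤ T₀ * (M * (K * T₀) ^ n * s ^ n / n.factorial) := by
                apply mul_le_mul_of_nonneg_right _ (hgnn s hs)
                have : T ≤ T₀ := h4
                linarith
            _ = T₀ * (M * (K * T₀) ^ n) * s ^ n / n.factorial := by ring
        · rw [intervalIntegral.integral_undef h]
          calc (0:ℝ) ≤ T₀ * (M * (K * T₀) ^ n * s ^ n / n.factorial) :=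
                mul_nonneg hT0 (hgnn s hs)
            _ = T₀ * (M * (K * T₀) ^ n) * s ^ n / n.factorial := by ring
      have houter : (∫ s in (0:ℝ)..t, ∫ u in s..T, d s u)
          ≤ T₀ * (M * (K * T₀) ^ n) / n.factorial * (t ^ (n + 1) / (n + 1)) := by
        have hcont : IntervalIntegrable
            (fun s : ℝ => T₀ * (M * (K * T₀) ^ n) / n.factorial * s ^ n) volume 0 t :=
          (Continuous.intervalIntegrable (by continuity) 0 t)
        by_cases H : IntervalIntegrable (fun s => ∫ u in s..T, d s u) volume 0 t
        · calc (∫ s in (0:ℝ)..t, ∫ u in s..T, d s u)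
              ≤ ∫ s in (0:ℝ)..t, T₀ * (M * (K * T₀) ^ n) / n.factorial * s ^ n := by
                apply intervalIntegral.integral_mono_on h1 H hcont
                intro s hs
                have := inner s hs.1 hs.2
                calc (∫ u in s..T, d s u)
                    ≤ T₀ * (M * (K * T₀) ^ n) * s ^ n / n.factorial := this
                  _ = T₀ * (M * (K * T₀) ^ n) / n.factorial * s ^ n := by ring
            _ = T₀ * (M * (K * T₀) ^ n) / n.factorial * ∫ s in (0:ℝ)..t, s ^ n := by
                rw [intervalIntegral.integral_const_mul]
            _ = T₀ * (M * (K * T₀) ^ n) / n.factorial * (t ^ (n + 1) / (n + 1)) := by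
                rw [integral_pow]; push_cast; ring
        · rw [intervalIntegral.integral_undef H]
          exact mul_nonneg (div_nonneg (mul_nonneg hT0 (mul_nonneg hM0 (pow_nonneg hKT n)))
            (Nat.cast_nonneg _)) (div_nonneg (pow_nonneg h1 _) (by positivity))
      have hd := hineq t T h1 h2 h3 h4
      have hfin : K * (T₀ * (M * (K * T₀) ^ n) / n.factorial * (t ^ (n + 1) / (n + 1)))
          = M * (K * T₀) ^ (n + 1) * t ^ (n + 1) / (n + 1).factorial := by
        rw [Nat.factorial_succ]
        push_cast
        field_simp
        ring
      calc d t T ≤ K * ∫ s in (0:ℝ)..t, ∫ u in s..T, d s u := hd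
        _ ≤ K * (T₀ * (M * (K * T₀) ^ n) / n.factorial * (t ^ (n + 1) / (n + 1))) :=
            mul_le_mul_of_nonneg_left houter hK.le
        _ = M * (K * T₀) ^ (n + 1) * t ^ (n + 1) / (n + 1).factorial := hfin
  intro t T h1 h2 h3 h4
  refine le_antisymm ?_ (hd0 t T h1 h2 h3 h4)
  have hbound : ∀ n : ℕ, d t T ≤ M * ((K * T₀ * t₀) ^ n / n.factorial) := by
    intro n
    have h := key n t T h1 h2 h3 h4
    have htpow : t ^ n ≤ t₀ ^ n := pow_le_pow_left₀ h1 h2 n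
    have : M * (K * T₀) ^ n * t ^ n ≤ M * (K * T₀) ^ n * t₀ ^ n :=
      mul_le_mul_of_nonneg_left htpow (by positivity)
    have h2' : d t T ≤ M * (K * T₀) ^ n * t₀ ^ n / n.factorial :=
      h.trans (div_le_div_of_nonneg_right this (Nat.cast_nonneg _))
    calc d t T ≤ M * (K * T₀) ^ n * t₀ ^ n / n.factorial := h2'
      _ = M * ((K * T₀ * t₀) ^ n / n.factorial) := by rw [mul_pow]; ring
  have hlim : Filter.Tendsto (fun n : ℕ => M * ((K * T₀ * t₀) ^ n / n.factorial))
      Filter.atTop (nhds 0) := by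
    have := (FloorSemiring.tendsto_pow_div_factorial_atTop (K * T₀ * t₀)).const_mul M
    simpa using this
  exact ge_of_tendsto' hlim fun n => hbound n
end

section
/- If d : A → ℝ₊ is bounded by M and satisfies d(t,T) ≤ K ∫₀ᵗ ∫ₛ^T d(s,u) du ds on A, then for every n ≥ 0 and all (t,T) ∈ A, d(t,T) ≤ M Kⁿ (tT)ⁿ / (n!)². -/
open MeasureTheory intervalIntegral

theorem gronwall_2d_iterate
    (t₀ T₀ : ℝ) (ht₀ : 0 < t₀) (hT₀ : t₀ ≤ T₀)
    (d : ℝ → ℝ → ℝ) (K M : ℝ) (hK : 0 < K) (hM : 0 < M)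
    (hd0 : ∀ t T, 0 ≤ t → t ≤ t₀ → t ≤ T → T ≤ T₀ → 0 ≤ d t T)
    (hbdd : ∀ t T, 0 ≤ t → t ≤ t₀ → t ≤ T → T ≤ T₀ → d t T ≤ M)
    (hineq : ∀ t T, 0 ≤ t → t ≤ t₀ → t ≤ T → T ≤ T₀ →
      d t T ≤ K * ∫ s in (0:ℝ)..t, ∫ u in s..T, d s u) :
    ∀ n : ℕ, ∀ t T, 0 ≤ t → t ≤ t₀ → t ≤ T → T ≤ T₀ →
      d t T ≤ M * K ^ n * (t * T) ^ n / ((Nat.factorial n : ℝ)) ^ 2 := by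
  intro n
  induction n with
  | zero =>
    intro t T h0 h1 h2 h3
    simpa using hbdd t T h0 h1 h2 h3
  | succ n ih =>
    intro t T h0 h1 h2 h3
    have hTnn : (0:ℝ) ≤ T := le_trans h0 h2
    set C : ℝ := M * K ^ n / (Nat.factorial n : ℝ) ^ 2 with hC
    have hfacpos : (0:ℝ) < (Nat.factorial n : ℝ) := by
      exact_mod_cast Nat.factorial_pos n
    have hCpos : 0 < C := by positivity
    have hn1 : (0:ℝ) < (n:ℝ) + 1 := by positivity
    -- inner bound
    have hinner : ∀ s ∈ Set.Icc (0:ℝ) t,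
        (∫ u in s..T, d s u) ≤ C * s ^ n * (T ^ (n+1) / ((n:ℝ)+1)) := by
      intro s hs
      obtain ⟨hs0, hst⟩ := hs
      have hsT : s ≤ T := le_trans hst h2
      have hst₀ : s ≤ t₀ := le_trans hst h1
      have hcont : Continuous (fun u : ℝ => C * (s * u) ^ n) := by continuity
      have hInt2 : IntervalIntegrable (fun u : ℝ => C * (s * u) ^ n) volume s T :=
        hcont.intervalIntegrable s T
      have hle1 : (∫ u in s..T, d s u) ≤ ∫ u in s..T, C * (s * u) ^ n := by
        by_cases hI : IntervalIntegrable (fun u => d s u) volume s T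
        · refine intervalIntegral.integral_mono_on hsT hI hInt2 ?_
          intro u hu
          calc d s u ≤ M * K ^ n * (s * u) ^ n / (Nat.factorial n : ℝ) ^ 2 :=
                ih s u hs0 hst₀ hu.1 (hu.2.trans h3)
            _ = C * (s * u) ^ n := by rw [hC]; ring
        · rw [intervalIntegral.integral_undef hI]
          apply intervalIntegral.integral_nonneg hsT
          intro u hu
          exact mul_nonneg hCpos.le (pow_nonneg (mul_nonneg hs0 (hs0.trans hu.1)) n)
      have hval : (∫ u in s..T, C * (s * u) ^ n)
          = C * s ^ n * ((T ^ (n+1) - s ^ (n+1)) / ((n:ℝ)+1)) := by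
        have : ∀ u : ℝ, C * (s * u) ^ n = (C * s ^ n) * u ^ n := by
          intro u; rw [mul_pow]; ring
        simp_rw [this]
        rw [intervalIntegral.integral_const_mul, integral_pow]
      have hle2 : C * s ^ n * ((T ^ (n+1) - s ^ (n+1)) / ((n:ℝ)+1))
          ≤ C * s ^ n * (T ^ (n+1) / ((n:ℝ)+1)) := by
        have hsub : T ^ (n+1) - s ^ (n+1) ≤ T ^ (n+1) := by
          have : (0:ℝ) ≤ s ^ (n+1) := by positivity
          linarith
        gcongr
      calc (∫ u in s..T, d s u) ≤ ∫ u in s..T, C * (s * u) ^ n := hle1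
        _ = C * s ^ n * ((T ^ (n+1) - s ^ (n+1)) / ((n:ℝ)+1)) := hval
        _ ≤ C * s ^ n * (T ^ (n+1) / ((n:ℝ)+1)) := hle2
    -- outer bound
    have gcont : Continuous (fun s : ℝ => C * s ^ n * (T ^ (n+1) / ((n:ℝ)+1))) := by
      continuity
    have houter : (∫ s in (0:ℝ)..t, ∫ u in s..T, d s u)
        ≤ ∫ s in (0:ℝ)..t, C * s ^ n * (T ^ (n+1) / ((n:ℝ)+1)) := by
      by_cases hI : IntervalIntegrable (fun s => ∫ u in s..T, d s u) volume 0 t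
      · exact intervalIntegral.integral_mono_on h0 hI (gcont.intervalIntegrable 0 t) hinner
      · rw [intervalIntegral.integral_undef hI]
        apply intervalIntegral.integral_nonneg h0
        intro s hs
        have hTp : (0:ℝ) ≤ T ^ (n+1) / ((n:ℝ)+1) := by positivity
        exact mul_nonneg (mul_nonneg hCpos.le (pow_nonneg hs.1 n)) hTp
    have houtval : (∫ s in (0:ℝ)..t, C * s ^ n * (T ^ (n+1) / ((n:ℝ)+1)))
        = (C * (T ^ (n+1) / ((n:ℝ)+1))) * ((t ^ (n+1) - 0 ^ (n+1)) / ((n:ℝ)+1)) := by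
      have : ∀ s : ℝ, C * s ^ n * (T ^ (n+1) / ((n:ℝ)+1))
          = (C * (T ^ (n+1) / ((n:ℝ)+1))) * s ^ n := by intro s; ring
      simp_rw [this]
      rw [intervalIntegral.integral_const_mul, integral_pow]
    have hmain := hineq t T h0 h1 h2 h3
    have hfinal : K * (∫ s in (0:ℝ)..t, ∫ u in s..T, d s u)
        ≤ M * K ^ (n+1) * (t * T) ^ (n+1) / ((Nat.factorial (n+1) : ℝ)) ^ 2 := by
      calc K * (∫ s in (0:ℝ)..t, ∫ u in s..T, d s u)
          ≤ K * ((C * (T ^ (n+1) / ((n:ℝ)+1))) * ((t ^ (n+1) - 0 ^ (n+1)) / ((n:ℝ)+1))) := by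
            rw [← houtval]; exact mul_le_mul_of_nonneg_left houter hK.le
        _ = M * K ^ (n+1) * (t * T) ^ (n+1) / ((Nat.factorial (n+1) : ℝ)) ^ 2 := by
            rw [hC]
            have hfs : (Nat.factorial (n+1) : ℝ) = ((n:ℝ)+1) * (Nat.factorial n : ℝ) := by
              push_cast [Nat.factorial_succ]; ring
            rw [hfs]
            field_simp
            ring
    exact hmain.trans hfinal
end
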